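/- For every fixed n ∈ ℕ, u_n(α)/α^n converges to the n-th Catalan number C_n = (1/(n+1)) · binom(2n, n) as α → ∞. (Equivalently, the moments of the spectral measure of α^{−1/2} A_α converge to the moments of the semicircle law on [−2, 2].) -/

import Mathlib

open Filter

/-- The `N × N` real symmetric tridiagonal matrix with zero diagonal and
off-diagonal entries `M_{k,k+1} = M_{k+1,k} = √(α + k + 1)` for `0 ≤ k ≤ N - 2`. -/
noncomputable def jacobiM (α : ℝ) (N : ℕ) : Matrix (Fin N) (Fin N) ℝ := fun i j =>
  if (i : ℕ) + 1 = (j : ℕ) then Real.sqrt (α + (i : ℕ) + 1)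
  else if (j : ℕ) + 1 = (i : ℕ) then Real.sqrt (α + (j : ℕ) + 1)
  else 0

/-- `u n (α) = A_α^{2n}(1,1)`, computed as the `(0,0)` entry of the `2n`-th power of the
`(n+1) × (n+1)` truncation of the Jacobi matrix `A_α`. -/
noncomputable def u (α : ℝ) (n : ℕ) : ℝ := ((jacobiM α (n + 1)) ^ (2 * n)) 0 0

/-! ### Auxiliary combinatorics: counting walks on the half line -/

/-- `walkF m k` is the number of walks of length `m` on `ℕ` (steps `±1`, reflecting-free,
staying `≥ 0`) from `0` to `k`, as a real number. -/
noncomputable def walkF : ℕ → ℕ → ℝ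
  | 0, 0 => 1
  | 0, _ + 1 => 0
  | m + 1, 0 => walkF m 1
  | m + 1, k + 1 => walkF m k + walkF m (k + 2)

@[simp] lemma walkF_zero_zero : walkF 0 0 = 1 := rfl
@[simp] lemma walkF_zero_succ (k : ℕ) : walkF 0 (k + 1) = 0 := rfl
@[simp] lemma walkF_succ_zero (m : ℕ) : walkF (m + 1) 0 = walkF m 1 := rfl
@[simp] lemma walkF_succ_succ (m k : ℕ) :
    walkF (m + 1) (k + 1) = walkF m k + walkF m (k + 2) := rfl

lemma walkF_eq_zero : ∀ m k : ℕ, m < k → walkF m k = 0 := by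
  intro m
  induction m with
  | zero =>
    intro k hk
    obtain ⟨j, rfl⟩ : ∃ j, k = j + 1 := ⟨k - 1, by omega⟩
    simp
  | succ m ih =>
    intro k hk
    obtain ⟨j, rfl⟩ : ∃ j, k = j + 1 := ⟨k - 1, by omega⟩
    rw [walkF_succ_succ, ih j (by omega), ih (j + 2) (by omega), add_zero]

lemma walkF_diag : ∀ m : ℕ, walkF m m = 1 := by
  intro m
  induction m with
  | zero => simp
  | succ m ih =>
    rw [walkF_succ_succ, ih, walkF_eq_zero m (m + 2) (by omega), add_zero]

/-- Closed form for the walk counts (ballot numbers). -/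
lemma walkF_closed :
    ∀ N a b : ℕ, a + b ≤ N → b ≤ a →
      walkF (a + b) (a - b) = ((a + b).choose b : ℝ) - ((a + b).choose (a + 1) : ℝ) := by
  intro N
  induction N with
  | zero =>
    intro a b h hba
    obtain rfl : a = 0 := by omega
    obtain rfl : b = 0 := by omega
    simp
  | succ N ih =>
    intro a b h hba
    rcases Nat.lt_or_ge (a + b) (N + 1) with h' | h'
    · exact ih a b (by omega) hba
    · have hab : a + b = N + 1 := by omega
      rcases b with _ | c
      · -- b = 0
        simp only [Nat.add_zero, Nat.sub_zero, Nat.choose_zero_right, Nat.cast_one]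
        rw [walkF_diag, Nat.choose_eq_zero_of_lt (by omega)]
        simp
      · rcases Nat.eq_or_lt_of_le hba with heq | hlt
        · -- a = c + 1 (i.e. a = b)
          subst heq
          have h1 : (c + 1) + (c + 1) = (2 * c + 1) + 1 := by omega
          rw [Nat.sub_self, h1, walkF_succ_zero]
          have i1 := ih (c + 1) c (by omega) (by omega)
          rw [show (c + 1) + c = 2 * c + 1 by omega, show (c + 1) - c = 1 by omega] at i1
          rw [i1]
          rw [Nat.choose_succ_succ (2 * c + 1) c,
            show c + 1 + 1 = (c + 1) + 1 from rfl,
            Nat.choose_succ_succ (2 * c + 1) (c + 1)]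
          simp only [Nat.succ_eq_add_one]
          push_cast
          ring
        · -- a > b
          obtain ⟨d, rfl⟩ : ∃ d, a = d + 1 := ⟨a - 1, by omega⟩
          have hdc : c + 1 ≤ d := by omega
          have hs : (d + 1) + (c + 1) = (d + c + 1) + 1 := by omega
          obtain ⟨e, he⟩ : ∃ e, (d + 1) - (c + 1) = e + 1 := ⟨d - c - 1, by omega⟩
          rw [hs, he, walkF_succ_succ]
          have i1 := ih d (c + 1) (by omega) (by omega)
          have i2 := ih (d + 1) c (by omega) (by omega)
          rw [show d + (c + 1) = d + c + 1 by omega, show d - (c + 1) = e by omega] at i1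
          rw [show (d + 1) + c = d + c + 1 by omega, show (d + 1) - c = e + 2 by omega] at i2
          rw [i1, i2]
          rw [Nat.choose_succ_succ (d + c + 1) c,
            show d + 1 + 1 = (d + 1) + 1 from rfl,
            Nat.choose_succ_succ (d + c + 1) (d + 1)]
          simp only [Nat.succ_eq_add_one]
          push_cast
          ring

lemma walkF_catalan (n : ℕ) : walkF (2 * n) 0 = (catalan n : ℝ) := by
  have h := walkF_closed (n + n) n n le_rfl le_rfl
  rw [Nat.sub_self] at h
  rw [show 2 * n = n + n by omega, h]
  have h1 : ((n : ℝ) + 1) * (catalan n : ℝ) = ((n + n).choose n : ℝ) := by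
    have := succ_mul_catalan_eq_centralBinom n
    have h2 : Nat.centralBinom n = (n + n).choose n := by
      unfold Nat.centralBinom
      congr 1
      omega
    rw [h2] at this
    exact_mod_cast this
  have h3 : ((n + n).choose (n + 1) : ℝ) * ((n : ℝ) + 1) = ((n + n).choose n : ℝ) * (n : ℝ) := by
    have := Nat.choose_succ_right_eq (n + n) n
    rw [show n + n - n = n by omega] at this
    exact_mod_cast this
  have hne : ((n : ℝ) + 1) ≠ 0 := by positivity
  apply mul_left_cancel₀ hne
  rw [mul_sub, h1]
  nlinarith [h3]

/-! ### The limiting (free) Jacobi matrix -/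

/-- The `N × N` adjacency matrix of the path graph. -/
def limitJ (N : ℕ) : Matrix (Fin N) (Fin N) ℝ := fun i j =>
  if (i : ℕ) + 1 = (j : ℕ) then 1 else if (j : ℕ) + 1 = (i : ℕ) then 1 else 0

lemma tridiag_mul {N : ℕ} (k : Fin N) (g : Fin N → ℝ) :
    (∑ j : Fin N, limitJ N k j * g j)
      = (if h : (k : ℕ) + 1 < N then g ⟨(k : ℕ) + 1, h⟩ else 0)
        + (if 0 < (k : ℕ) then g ⟨(k : ℕ) - 1, by omega⟩ else 0) := by
  classical
  set g' : ℕ → ℝ := fun i => if h : i < N then g ⟨i, h⟩ else 0 with hg'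
  have hsum : (∑ j : Fin N, limitJ N k j * g j)
      = ∑ i ∈ Finset.range N,
          (((if (k : ℕ) + 1 = i then (1 : ℝ) else 0) * g' i)
            + ((if i + 1 = (k : ℕ) then (1 : ℝ) else 0) * g' i)) := by
    rw [← Fin.sum_univ_eq_sum_range (fun i =>
        ((if (k : ℕ) + 1 = i then (1 : ℝ) else 0) * g' i)
          + ((if i + 1 = (k : ℕ) then (1 : ℝ) else 0) * g' i)) N]
    apply Finset.sum_congr rfl
    intro j _
    have hgj : g' (j : ℕ) = g j := by
      simp [hg', j.isLt]
    rw [hgj]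
    by_cases h1 : (k : ℕ) + 1 = (j : ℕ)
    · have h2 : ¬ ((j : ℕ) + 1 = (k : ℕ)) := by omega
      simp [limitJ, h1, h2]
    · by_cases h2 : (j : ℕ) + 1 = (k : ℕ)
      · simp [limitJ, h1, h2]
      · simp [limitJ, h1, h2]
  rw [hsum, Finset.sum_add_distrib]
  congr 1
  · -- first sum
    have : ∀ i ∈ Finset.range N,
        (if (k : ℕ) + 1 = i then (1 : ℝ) else 0) * g' i
          = (if (k : ℕ) + 1 = i then g' i else 0) := by
      intro i _
      split_ifs <;> simp
    rw [Finset.sum_congr rfl this, Finset.sum_ite_eq]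
    by_cases h : (k : ℕ) + 1 < N
    · rw [if_pos (Finset.mem_range.mpr h), dif_pos h]
      simp [hg', h]
    · rw [if_neg (fun hc => h (Finset.mem_range.mp hc)), dif_neg h]
  · -- second sum
    by_cases hk : 0 < (k : ℕ)
    · have hcond : ∀ i, (i + 1 = (k : ℕ)) ↔ ((k : ℕ) - 1 = i) := by omega
      have : ∀ i ∈ Finset.range N,
          (if i + 1 = (k : ℕ) then (1 : ℝ) else 0) * g' i
            = (if (k : ℕ) - 1 = i then g' i else 0) := by
        intro i _
        rw [if_congr (hcond i) rfl rfl]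
        split_ifs <;> simp
      rw [Finset.sum_congr rfl this, Finset.sum_ite_eq]
      have hlt : (k : ℕ) - 1 < N := by have := k.isLt; omega
      rw [if_pos (Finset.mem_range.mpr hlt), if_pos hk]
      simp [hg', hlt]
    · rw [if_neg hk]
      apply Finset.sum_eq_zero
      intro i _
      have : ¬ (i + 1 = (k : ℕ)) := by omega
      simp [this]

lemma limitJ_pow_apply (n : ℕ) :
    ∀ (m : ℕ) (k : Fin (n + 1)), m + (k : ℕ) ≤ 2 * n →
      ((limitJ (n + 1)) ^ m) k 0 = walkF m (k : ℕ) := by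
  intro m
  induction m with
  | zero =>
    intro k _
    rw [pow_zero]
    by_cases hk : k = 0
    · subst hk
      simp [Matrix.one_apply]
    · have hk' : (k : ℕ) ≠ 0 := fun h => hk (Fin.ext (by simpa using h))
      obtain ⟨j, hj⟩ : ∃ j, (k : ℕ) = j + 1 := ⟨(k : ℕ) - 1, by omega⟩
      rw [Matrix.one_apply_ne hk, hj, walkF_zero_succ]
  | succ m ih =>
    intro k hk
    rw [pow_succ', Matrix.mul_apply]
    rw [tridiag_mul k (fun j => ((limitJ (n + 1)) ^ m) j 0)]
    by_cases hk0 : (k : ℕ) = 0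
    · have hn : 1 ≤ n := by omega
      have h1 : (k : ℕ) + 1 < n + 1 := by omega
      rw [dif_pos h1, if_neg (by omega)]
      have := ih ⟨(k : ℕ) + 1, h1⟩ (by simp only [Fin.val_mk]; omega)
      rw [this, add_zero]
      show walkF m ((k : ℕ) + 1) = walkF (m + 1) (k : ℕ)
      rw [hk0, walkF_succ_zero]
    · obtain ⟨j, hj⟩ : ∃ j, (k : ℕ) = j + 1 := ⟨(k : ℕ) - 1, by omega⟩
      by_cases htop : (k : ℕ) + 1 < n + 1
      · rw [dif_pos htop, if_pos (by omega)]
        have i1 := ih ⟨(k : ℕ) + 1, htop⟩ (by simp only [Fin.val_mk]; omega)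
        have i2 := ih ⟨(k : ℕ) - 1, by omega⟩ (by simp only [Fin.val_mk]; omega)
        rw [i1, i2]
        show walkF m ((k : ℕ) + 1) + walkF m ((k : ℕ) - 1) = walkF (m + 1) (k : ℕ)
        rw [hj]
        rw [show j + 1 + 1 = j + 2 from rfl, show j + 1 - 1 = j from rfl, walkF_succ_succ]
        ring
      · -- k = n (top index)
        have hkn : (k : ℕ) = n := by have := k.isLt; omega
        rw [dif_neg htop, if_pos (by omega)]
        have i2 := ih ⟨(k : ℕ) - 1, by omega⟩ (by simp only [Fin.val_mk]; omega)
        rw [i2]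
        show (0 : ℝ) + walkF m ((k : ℕ) - 1) = walkF (m + 1) (k : ℕ)
        rw [hj]
        rw [show j + 1 - 1 = j from rfl, walkF_succ_succ]
        have hz : walkF m (j + 2) = 0 := by
          apply walkF_eq_zero
          omega
        rw [hz]
        ring

/-! ### The rescaled matrix and the limit -/

/-- The rescaled Jacobi matrix `α^{-1/2} A_α` (truncated). -/
noncomputable def scaledJ (α : ℝ) (N : ℕ) : Matrix (Fin N) (Fin N) ℝ := fun i j =>
  if (i : ℕ) + 1 = (j : ℕ) then Real.sqrt (1 + ((i : ℕ) + 1) / α)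
  else if (j : ℕ) + 1 = (i : ℕ) then Real.sqrt (1 + ((j : ℕ) + 1) / α)
  else 0

lemma jacobiM_eq_smul {α : ℝ} (hα : 0 < α) (N : ℕ) :
    jacobiM α N = Real.sqrt α • scaledJ α N := by
  funext i j
  have key : ∀ c : ℝ, 0 ≤ c → Real.sqrt α * Real.sqrt (1 + c / α) = Real.sqrt (α + c) := by
    intro c _
    rw [← Real.sqrt_mul hα.le]
    congr 1
    field_simp
  simp only [jacobiM, scaledJ, Matrix.smul_apply, smul_eq_mul]
  split_ifs with h1 h2
  · rw [show (α + (i : ℕ) + 1 : ℝ) = α + ((i : ℕ) + 1) by ring,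
      ← key ((i : ℕ) + 1) (by positivity)]
  · rw [show (α + (j : ℕ) + 1 : ℝ) = α + ((j : ℕ) + 1) by ring,
      ← key ((j : ℕ) + 1) (by positivity)]
  · rw [mul_zero]

lemma u_div_eq {α : ℝ} (hα : 0 < α) (n : ℕ) :
    u α n / α ^ n = ((scaledJ α (n + 1)) ^ (2 * n)) 0 0 := by
  unfold u
  rw [jacobiM_eq_smul hα, smul_pow, Matrix.smul_apply, smul_eq_mul]
  have hpow : Real.sqrt α ^ (2 * n) = α ^ n := by
    rw [pow_mul, Real.sq_sqrt hα.le]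
  rw [hpow, mul_div_cancel_left₀ _ (pow_ne_zero n hα.ne')]

theorem u_div_pow_tendsto_catalan (n : ℕ) :
    Tendsto (fun α : ℝ => u α n / α ^ n) atTop (nhds (catalan n : ℝ)) := by
  have hJ : Tendsto (fun α : ℝ => scaledJ α (n + 1)) atTop (nhds (limitJ (n + 1))) := by
    refine tendsto_pi_nhds.2 ?_
    intro i
    rw [tendsto_pi_nhds]
    intro j
    have hgen : ∀ c : ℝ, Tendsto (fun α : ℝ => Real.sqrt (1 + c / α)) atTop (nhds 1) := by
      intro c
      have h1 : Tendsto (fun α : ℝ => 1 + c / α) atTop (nhds 1) := by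
        have h0 : Tendsto (fun α : ℝ => c / α) atTop (nhds 0) :=
          Tendsto.div_atTop tendsto_const_nhds tendsto_id
        simpa using tendsto_const_nhds.add h0
      have h2 := (Real.continuous_sqrt.tendsto 1).comp h1
      simpa [Real.sqrt_one, Function.comp_def] using h2
    simp only [scaledJ, limitJ]
    split_ifs with h1 h2
    · exact hgen _
    · exact hgen _
    · exact tendsto_const_nhds
  have hcont : Continuous (fun M : Matrix (Fin (n + 1)) (Fin (n + 1)) ℝ => (M ^ (2 * n)) 0 0) :=
    (continuous_apply (0 : Fin (n + 1))).comp
      ((continuous_apply (0 : Fin (n + 1))).comp (continuous_pow (2 * n)))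
  have hval : ((limitJ (n + 1)) ^ (2 * n)) 0 0 = (catalan n : ℝ) := by
    have h := limitJ_pow_apply n (2 * n) 0 (by simp)
    rw [h]
    simpa using walkF_catalan n
  have hmain : Tendsto (fun α : ℝ => ((scaledJ α (n + 1)) ^ (2 * n)) 0 0) atTop
      (nhds (catalan n : ℝ)) := by
    rw [← hval]
    exact (hcont.tendsto _).comp hJ
  apply Tendsto.congr' _ hmain
  filter_upwards [eventually_gt_atTop (0 : ℝ)] with α hα
  exact (u_div_eq hα n).symm
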